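/- arXiv:1506.00072 — 5 statements merged into one kernel-verified Lean document; each statement's English description precedes it below -/
import Mathlib

section
/- Let A be a bounded self-adjoint operator, φ ∈ H, A_α = A + α(·,φ)φ, and define F(λ) = ((A-λI)⁻¹φ, φ), F_α(λ) = ((A_α-λI)⁻¹φ, φ) for λ ∈ ℂ \ ℝ. Then F_α = F/(1 + αF) (the Aronszajn–Krein formula). -/
open ContinuousLinearMap

/-- The Aronszajn–Krein formula: with `F(λ) = ((A-λ)⁻¹φ, φ)` and
`F_α(λ) = ((A_α-λ)⁻¹φ, φ)` for `A_α = A + α(·, φ)φ`, one has `F_α = F/(1 + αF)`. -/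
theorem stmt2 {H : Type*} [NormedAddCommGroup H] [InnerProductSpace ℂ H] [CompleteSpace H]
    (A : H →L[ℂ] H) (hA : IsSelfAdjoint A) (φ : H) (α : ℝ)
    (Aα : H →L[ℂ] H) (hAα : Aα = A + (α : ℂ) • (innerSL ℂ φ).smulRight φ)
    (z : ℂ) (hz : z.im ≠ 0)
    (R Rα : H →L[ℂ] H)
    (hR1 : (A - z • 1) ∘L R = 1) (hR2 : R ∘L (A - z • 1) = 1)
    (hRα1 : (Aα - z • 1) ∘L Rα = 1) (hRα2 : Rα ∘L (Aα - z • 1) = 1)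
    (F Fα : ℂ) (hF : F = (inner ℂ φ (R φ) : ℂ)) (hFα : Fα = (inner ℂ φ (Rα φ) : ℂ)) :
    Fα = F / (1 + (α : ℂ) * F) := by
  -- (A - z)(R φ) = φ
  have h0 : (A - z • 1) (R φ) = φ := by
    have := DFunLike.congr_fun hR1 φ
    simpa using this
  -- (Aα - z)(R φ) = (1 + α F) • φ
  have h1 : (Aα - z • 1) (R φ) = (1 + (α : ℂ) * F) • φ := by
    have heq : Aα - z • 1 = (A - z • 1) + (α : ℂ) • (innerSL ℂ φ).smulRight φ := by
      rw [hAα]; abel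
    rw [heq, hF]
    simp only [add_apply, h0, smul_apply, smulRight_apply, innerSL_apply_apply, add_smul, one_smul,
      smul_smul]
  -- R φ = (1 + α F) • Rα φ
  have key : R φ = (1 + (α : ℂ) * F) • Rα φ := by
    have h2 := DFunLike.congr_fun hRα2 (R φ)
    simp only [comp_apply, one_apply, h1, map_smul] at h2
    exact h2.symm
  -- 1 + α F ≠ 0
  have hne : (1 + (α : ℂ) * F) ≠ 0 := by
    intro h
    rw [h, zero_smul] at key
    have hφ : φ = 0 := by rw [← h0, key, map_zero]
    rw [hφ] at hF
    simp at hF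
    rw [hF, mul_zero, add_zero] at h
    exact one_ne_zero h
  -- F = (1 + α F) * Fα
  have hFe : F = (1 + (α : ℂ) * F) * Fα := by
    rw [hFα, ← inner_smul_right, ← key, ← hF]
  rw [eq_div_iff hne]
  linear_combination -hFe
end

section
/- Let U be a unitary operator on a Hilbert space H, b ∈ H with ‖b‖ = 1, and for γ ∈ ℂ define U_γ := U + (γ-1)(·, U*b)b. Then U_γ is unitary if and only if |γ| = 1, and U_γ is a contraction (‖U_γ‖ ≤ 1) whenever |γ| ≤ 1. -/
open ContinuousLinearMap

local notation "⟪" x ", " y "⟫" => @inner ℂ _ _ x y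

/-- For a unitary `U`, a unit vector `b` and `U_γ = U + (γ-1)(·, U*b)b`:
`U_γ` is unitary iff `|γ| = 1`, and `U_γ` is a contraction whenever `|γ| ≤ 1`. -/
theorem stmt4 {H : Type*} [NormedAddCommGroup H] [InnerProductSpace ℂ H] [CompleteSpace H]
    (U : H →L[ℂ] H) (hU : U ∈ unitary (H →L[ℂ] H))
    (b : H) (hb : ‖b‖ = 1) (γ : ℂ)
    (Uγ : H →L[ℂ] H)
    (hUγ : Uγ = U + (γ - 1) • (innerSL ℂ (ContinuousLinearMap.adjoint U b)).smulRight b) :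
    (Uγ ∈ unitary (H →L[ℂ] H) ↔ ‖γ‖ = 1) ∧
    (‖γ‖ ≤ 1 → ‖Uγ‖ ≤ 1) := by
  have hU1 : ContinuousLinearMap.adjoint U * U = 1 := by
    rw [← star_eq_adjoint]; exact hU.1
  have hU2 : U * ContinuousLinearMap.adjoint U = 1 := by
    rw [← star_eq_adjoint]; exact hU.2
  set c : H := ContinuousLinearMap.adjoint U b with hc
  have hbb : ⟪b, b⟫ = 1 := by
    rw [inner_self_eq_norm_sq_to_K, hb]; norm_num
  have hcc : ⟪c, c⟫ = 1 := by
    rw [hc, adjoint_inner_left, ← ContinuousLinearMap.mul_apply, hU2, ContinuousLinearMap.one_apply, hbb]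
  have hUU : ∀ x y : H, ⟪U x, U y⟫ = ⟪x, y⟫ := by
    intro x y
    rw [← adjoint_inner_right, ← ContinuousLinearMap.mul_apply, hU1, ContinuousLinearMap.one_apply]
  have keyA : ∀ x y : H, ⟪Uγ y, Uγ x⟫ =
      ⟪y, x⟫ + (starRingEnd ℂ γ * γ - 1) * (⟪y, c⟫ * ⟪c, x⟫) := by
    intro x y
    have hUyb : ⟪U y, b⟫ = ⟪y, c⟫ := by rw [hc, adjoint_inner_right]
    have hbUx : ⟪b, U x⟫ = ⟪c, x⟫ := by rw [hc, adjoint_inner_left]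
    simp only [hUγ, add_apply, smul_apply, smulRight_apply, innerSL_apply_apply,
      inner_add_add_self, inner_add_left, inner_add_right, inner_smul_left,
      inner_smul_right, hUU, hUyb, hbUx, hbb, inner_conj_symm, map_mul, map_sub, map_one]
    ring
  have hadj : ContinuousLinearMap.adjoint Uγ =
      ContinuousLinearMap.adjoint U +
        (starRingEnd ℂ (γ - 1)) • (innerSL ℂ b).smulRight c := by
    rw [eq_comm, ContinuousLinearMap.eq_adjoint_iff]
    intro x y
    simp only [hUγ, add_apply, smul_apply, smulRight_apply, innerSL_apply_apply,
      inner_add_left, inner_add_right, inner_smul_left, inner_smul_right,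
      adjoint_inner_left, inner_conj_symm, map_sub, map_one, RingHomCompTriple.comp_apply,
      RingHom.id_apply, starRingEnd_self_apply]
    ring
  have hU'U' : ∀ x y : H, ⟪(ContinuousLinearMap.adjoint U) x, (ContinuousLinearMap.adjoint U) y⟫ = ⟪x, y⟫ := by
    intro x y
    rw [adjoint_inner_left, ← ContinuousLinearMap.mul_apply, hU2, ContinuousLinearMap.one_apply]
  have keyB : ∀ x y : H, ⟪(ContinuousLinearMap.adjoint Uγ) y, (ContinuousLinearMap.adjoint Uγ) x⟫ =
      ⟪y, x⟫ + (starRingEnd ℂ γ * γ - 1) * (⟪y, b⟫ * ⟪b, x⟫) := by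
    intro x y
    have h1 : ⟪(ContinuousLinearMap.adjoint U) y, c⟫ = ⟪y, b⟫ := by rw [hc, hU'U']
    have h2 : ⟪c, (ContinuousLinearMap.adjoint U) x⟫ = ⟪b, x⟫ := by rw [hc, hU'U']
    simp only [hadj, add_apply, smul_apply, smulRight_apply, innerSL_apply_apply,
      inner_add_left, inner_add_right, inner_smul_left, inner_smul_right,
      h1, h2, hcc, hU'U', inner_conj_symm, map_mul, map_sub, map_one, RingHomCompTriple.comp_apply,
      RingHom.id_apply, starRingEnd_self_apply]
    ring
  have hS1 : star Uγ * Uγ = 1 + (starRingEnd ℂ γ * γ - 1) • (innerSL ℂ c).smulRight c := by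
    ext x
    apply ext_inner_left ℂ
    intro y
    rw [ContinuousLinearMap.mul_apply, star_eq_adjoint, adjoint_inner_right, keyA]
    simp only [add_apply, ContinuousLinearMap.one_apply, smul_apply, smulRight_apply, innerSL_apply_apply,
      inner_add_right, inner_smul_right]
    ring
  have hS2 : Uγ * star Uγ = 1 + (starRingEnd ℂ γ * γ - 1) • (innerSL ℂ b).smulRight b := by
    ext x
    apply ext_inner_left ℂ
    intro y
    rw [ContinuousLinearMap.mul_apply, star_eq_adjoint, ← adjoint_inner_left, keyB]
    simp only [add_apply, ContinuousLinearMap.one_apply, smul_apply, smulRight_apply, innerSL_apply_apply,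
      inner_add_right, inner_smul_right]
    ring
  have habs : starRingEnd ℂ γ * γ = ((Complex.normSq γ : ℝ) : ℂ) :=
    (Complex.normSq_eq_conj_mul_self).symm
  constructor
  · constructor
    · intro hmem
      have h1 : star Uγ * Uγ = 1 := hmem.1
      rw [hS1] at h1
      have h2 : (starRingEnd ℂ γ * γ - 1) • ((innerSL ℂ c).smulRight c) = 0 := by
        have := congrArg (· - (1 : H →L[ℂ] H)) h1
        simpa using this
      have h3 := congrFun (congrArg DFunLike.coe h2) c
      simp only [smul_apply, smulRight_apply, innerSL_apply_apply, hcc, one_smul, zero_apply] at h3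
      have hc0 : c ≠ 0 := by
        intro h
        rw [h, inner_zero_left] at hcc
        exact one_ne_zero hcc.symm
      have h4 : starRingEnd ℂ γ * γ - 1 = 0 := by
        by_contra h
        exact hc0 (by simpa [smul_eq_zero, h] using h3)
      have h5 : starRingEnd ℂ γ * γ = 1 := by rwa [sub_eq_zero] at h4
      rw [habs] at h5
      have h6 : Complex.normSq γ = 1 := by exact_mod_cast h5
      have h7 : (‖γ‖) ^ 2 = 1 := by rw [Complex.sq_norm]; exact h6
      nlinarith [norm_nonneg γ]
    · intro hγ
      have h0 : starRingEnd ℂ γ * γ - 1 = 0 := by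
        rw [habs]
        rw [← Complex.sq_norm γ, hγ] ; norm_num
      exact ⟨by rw [hS1, h0, zero_smul, add_zero], by rw [hS2, h0, zero_smul, add_zero]⟩
  · intro hγ
    refine ContinuousLinearMap.opNorm_le_bound _ zero_le_one (fun x => ?_)
    rw [one_mul]
    have hsq : ‖Uγ x‖ ^ 2 ≤ ‖x‖ ^ 2 := by
      have key := keyA x x
      have h3 : ⟪x, c⟫ * ⟪c, x⟫ = ((Complex.normSq ⟪c, x⟫ : ℝ) : ℂ) := by
        rw [Complex.normSq_eq_conj_mul_self, inner_conj_symm]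
      rw [h3, habs] at key
      have h4 := congrArg Complex.re key
      have h5 : ‖Uγ x‖ ^ 2 = ‖x‖ ^ 2 + (Complex.normSq γ - 1) * Complex.normSq ⟪c, x⟫ := by
        rw [@norm_sq_eq_re_inner ℂ, @norm_sq_eq_re_inner ℂ]
        simpa using h4
      have h6 : (Complex.normSq γ - 1) * Complex.normSq ⟪c, x⟫ ≤ 0 := by
        apply mul_nonpos_of_nonpos_of_nonneg
        · have : Complex.normSq γ = (‖γ‖) ^ 2 := (Complex.sq_norm γ).symm
          nlinarith [norm_nonneg γ]
        · exact Complex.normSq_nonneg _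
      linarith
    have := Real.sqrt_le_sqrt hsq
    rwa [Real.sqrt_sq (norm_nonneg _), Real.sqrt_sq (norm_nonneg _)] at this
end

section
/- Let μ be a finite Borel measure on the unit circle 𝕋, let U = M_ξ be multiplication by the independent variable on L²(μ), b ≡ 1, b₁ = U*b, and U_α = U + (α-1)(·, b₁)b for α ∈ 𝕋. Suppose V : L²(μ) → L²(μ_α) is unitary with V1 = 1 and V U_α = M_z V. Then for every n ≥ 0, (V ξⁿ)(z) = zⁿ + (1-α)∫_𝕋 (ξⁿ - zⁿ)/(1 - ξ̄z) dμ(ξ) for μ_α-a.e. z ∈ 𝕋. -/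
open MeasureTheory ComplexConjugate ContinuousLinearMap

open scoped InnerProductSpace

set_option maxHeartbeats 1000000

/-- Representation theorem for rank one unitary perturbations of a unitary operator:
if `U = M_ξ` on `L²(μ)` over `𝕋`, `b ≡ 1`, `b₁ = U*b`, `U_α = U + (α-1)(·, b₁)b`
(`|α| = 1`), and `V : L²(μ) → L²(μ_α)` is unitary with `V1 = 1` and `V U_α = M_z V`,
then `(V ξⁿ)(z) = zⁿ + (1-α)∫ (ξⁿ - zⁿ)/(1 - ξ̄z) dμ(ξ)` for `μ_α`-a.e. `z`,
the quotient being understood via the finite geometric sum. -/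

theorem stmt11
    (μ μα : Measure (Metric.sphere (0 : ℂ) 1))
    [IsFiniteMeasure μ] [IsFiniteMeasure μα]
    (α : ℂ) (hα : ‖α‖ = 1)
    (Mξ : Lp ℂ 2 μ →L[ℂ] Lp ℂ 2 μ)
    (hMξ : ∀ f : Lp ℂ 2 μ, ⇑(Mξ f) =ᵐ[μ] fun ξ => (ξ : ℂ) * f ξ)
    (Mz : Lp ℂ 2 μα →L[ℂ] Lp ℂ 2 μα)
    (hMz : ∀ f : Lp ℂ 2 μα, ⇑(Mz f) =ᵐ[μα] fun z => (z : ℂ) * f z)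
    (oneμ : Lp ℂ 2 μ) (h1μ : ⇑oneμ =ᵐ[μ] fun _ => (1 : ℂ))
    (oneα : Lp ℂ 2 μα) (h1α : ⇑oneα =ᵐ[μα] fun _ => (1 : ℂ))
    (b1 : Lp ℂ 2 μ) (hb1 : ⇑b1 =ᵐ[μ] fun ξ => conj (ξ : ℂ))
    (Uα : Lp ℂ 2 μ →L[ℂ] Lp ℂ 2 μ)
    (hUα : Uα = Mξ + (α - 1) • (innerSL ℂ b1).smulRight oneμ)
    (V : Lp ℂ 2 μ ≃ₗᵢ[ℂ] Lp ℂ 2 μα)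
    (hV1 : V oneμ = oneα)
    (hVint : ∀ f : Lp ℂ 2 μ, V (Uα f) = Mz (V f))
    (n : ℕ) (ξn : Lp ℂ 2 μ) (hξn : ⇑ξn =ᵐ[μ] fun ξ => (ξ : ℂ) ^ n) :
    ⇑(V ξn) =ᵐ[μα] fun z => (z : ℂ) ^ n +
      (1 - α) * ∫ ξ, (ξ : ℂ) * ∑ k ∈ Finset.range n, (ξ : ℂ) ^ k * (z : ℂ) ^ (n - 1 - k) ∂μ := by
  -- abs of points on the sphere
  have habs : ∀ ξ : Metric.sphere (0 : ℂ) 1, ‖(ξ : ℂ)‖ = 1 := fun ξ => by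
    simpa using (Metric.mem_sphere.mp ξ.2)
  -- the canonical Lp elements ξⁿ
  have hmem : ∀ m : ℕ, MemLp (fun ξ : Metric.sphere (0 : ℂ) 1 => (ξ : ℂ) ^ m) 2 μ := by
    intro m
    apply MemLp.of_bound ((Continuous.pow (by continuity) m).aestronglyMeasurable) 1
    filter_upwards with ξ
    simp [norm_pow, habs ξ]
  set e : ℕ → Lp ℂ 2 μ := fun m => (hmem m).toLp _ with he
  have hecoe : ∀ m, ⇑(e m) =ᵐ[μ] fun ξ => (ξ : ℂ) ^ m := fun m => (hmem m).coeFn_toLp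
  -- integrability of bounded continuous functions of ξ
  have hint : ∀ (g : Metric.sphere (0 : ℂ) 1 → ℂ), Continuous g → (∀ x, ‖g x‖ ≤ 1) →
      Integrable g μ := by
    intro g hg hb
    exact memLp_one_iff_integrable.mp (MemLp.of_bound hg.aestronglyMeasurable 1 (.of_forall hb))
  -- main claim by induction
  suffices H : ∀ m : ℕ, ⇑(V (e m)) =ᵐ[μα] fun z => (z : ℂ) ^ m +
      (1 - α) * ∫ ξ, (ξ : ℂ) * ∑ k ∈ Finset.range m, (ξ : ℂ) ^ k * (z : ℂ) ^ (m - 1 - k) ∂μ by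
    have : ξn = e n := Lp.ext (hξn.trans (hecoe n).symm)
    rw [this]; exact H n
  intro m
  induction m with
  | zero =>
    have h0 : e 0 = oneμ := Lp.ext ((hecoe 0).trans ((by simp : ((fun ξ :
        Metric.sphere (0 : ℂ) 1 => (ξ : ℂ) ^ 0)) = fun _ => (1 : ℂ)) ▸ h1μ.symm))
    rw [h0, hV1]
    filter_upwards [h1α] with z hz
    simp [hz]
  | succ m ih =>
    -- the inner product ⟪b1, e m⟫ = ∫ ξ^{m+1}
    have hinner : ⟪b1, e m⟫_ℂ = ∫ ξ, (ξ : ℂ) ^ (m + 1) ∂μ := by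
      rw [L2.inner_def]
      apply integral_congr_ae
      filter_upwards [hb1, hecoe m] with ξ h1 h2
      have hmul : conj (conj (ξ : ℂ)) * (ξ : ℂ) ^ m = (ξ : ℂ) ^ (m + 1) := by
        rw [Complex.conj_conj, pow_succ, mul_comm]
      rw [mul_comm] at hmul
      simpa [h1, h2] using hmul
    set c : ℂ := ∫ ξ, (ξ : ℂ) ^ (m + 1) ∂μ with hc
    -- Uα (e m) = e (m+1) + (α-1)•c•oneμ
    have hMξe : Mξ (e m) = e (m + 1) := by
      apply Lp.ext
      filter_upwards [hMξ (e m), hecoe m, hecoe (m + 1)] with ξ h1 h2 h3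
      rw [h1, h2, h3, pow_succ, mul_comm]
    have hUαe : Uα (e m) = e (m + 1) + ((α - 1) * c) • oneμ := by
      rw [hUα]
      simp only [add_apply, smul_apply, smulRight_apply, innerSL_apply_apply, hinner, ← hc, hMξe,
        smul_smul]
    have hVem1 : V (e (m + 1)) = Mz (V (e m)) - ((α - 1) * c) • oneα := by
      have : e (m + 1) = Uα (e m) - ((α - 1) * c) • oneμ := by rw [hUαe]; abel
      rw [this, map_sub, hVint, LinearIsometryEquiv.map_smul, hV1]
    rw [hVem1]
    -- pointwise identity for the integrand
    have hptwise : ∀ z : Metric.sphere (0 : ℂ) 1,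
        (∫ ξ, (ξ : ℂ) * ∑ k ∈ Finset.range (m + 1), (ξ : ℂ) ^ k * (z : ℂ) ^ (m + 1 - 1 - k) ∂μ)
        = c + (z : ℂ) * ∫ ξ, (ξ : ℂ) * ∑ k ∈ Finset.range m, (ξ : ℂ) ^ k * (z : ℂ) ^ (m - 1 - k) ∂μ := by
      intro z
      have hbound : ∀ (w : ℂ) (j : ℕ), ‖w‖ = 1 →
          ∀ x : Metric.sphere (0 : ℂ) 1,
          ‖(x : ℂ) * ∑ k ∈ Finset.range j, (x : ℂ) ^ k * w ^ (j - 1 - k)‖ ≤ (j : ℝ) := by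
        intro w j hw x
        calc ‖(x : ℂ) * ∑ k ∈ Finset.range j, (x : ℂ) ^ k * w ^ (j - 1 - k)‖
            = ‖∑ k ∈ Finset.range j, (x : ℂ) ^ k * w ^ (j - 1 - k)‖ := by
              simp [norm_mul, habs x]
          _ ≤ ∑ k ∈ Finset.range j, ‖(x : ℂ) ^ k * w ^ (j - 1 - k)‖ := norm_sum_le _ _
          _ = ∑ k ∈ Finset.range j, 1 := by
              apply Finset.sum_congr rfl
              intro k _
              simp [norm_mul, norm_pow, habs x, hw]
          _ = (j : ℝ) := by simp
      have hi1 : Integrable (fun ξ : Metric.sphere (0 : ℂ) 1 =>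
          (ξ : ℂ) * ∑ k ∈ Finset.range m, (ξ : ℂ) ^ k * (z : ℂ) ^ (m - 1 - k)) μ := by
        refine memLp_one_iff_integrable.mp (MemLp.of_bound ?_ (m : ℝ) (.of_forall
          (hbound (z : ℂ) m (habs z))))
        exact ((continuous_subtype_val).mul (continuous_finset_sum _ fun k _ =>
          ((continuous_subtype_val.pow k).mul continuous_const))).aestronglyMeasurable
      have hi2 : Integrable (fun ξ : Metric.sphere (0 : ℂ) 1 => (ξ : ℂ) ^ (m + 1)) μ :=
        memLp_one_iff_integrable.mp ((hmem (m + 1)).mono_exponent (by norm_num))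
      have key : (fun ξ : Metric.sphere (0 : ℂ) 1 =>
          (ξ : ℂ) * ∑ k ∈ Finset.range (m + 1), (ξ : ℂ) ^ k * (z : ℂ) ^ (m + 1 - 1 - k))
          = fun ξ : Metric.sphere (0 : ℂ) 1 => (ξ : ℂ) ^ (m + 1) + (z : ℂ) *
            ((ξ : ℂ) * ∑ k ∈ Finset.range m, (ξ : ℂ) ^ k * (z : ℂ) ^ (m - 1 - k)) := by
        funext ξ
        rw [Finset.sum_range_succ]
        have h1 : (m + 1 - 1 - m : ℕ) = 0 := by omega
        have h2 : ∑ k ∈ Finset.range m, (ξ : ℂ) ^ k * (z : ℂ) ^ (m + 1 - 1 - k)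
            = (z : ℂ) * ∑ k ∈ Finset.range m, (ξ : ℂ) ^ k * (z : ℂ) ^ (m - 1 - k) := by
          rw [Finset.mul_sum]
          apply Finset.sum_congr rfl
          intro k hk
          have hk' : k < m := Finset.mem_range.mp hk
          have : (m + 1 - 1 - k : ℕ) = (m - 1 - k) + 1 := by omega
          rw [this, pow_succ]
          ring
        rw [h2, h1, pow_zero, mul_one, mul_add, pow_succ, mul_comm ((ξ:ℂ)^m) (ξ:ℂ)]
        ring
      rw [key, integral_add hi2 (hi1.const_mul _), integral_const_mul]
    -- now combine a.e. facts
    filter_upwards [Lp.coeFn_sub (Mz (V (e m))) (((α - 1) * c) • oneα),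
      Lp.coeFn_smul ((α - 1) * c) oneα, hMz (V (e m)), ih, h1α] with z hsub hsmul hmz hih h1
    rw [hsub]
    simp only [Pi.sub_apply]
    rw [hsmul, hmz, hih]
    simp only [Pi.smul_apply, h1, smul_eq_mul, mul_one]
    rw [hptwise z]
    ring
end

section
/- Let A be a contraction on a Hilbert space H (‖A‖ ≤ 1). Define the characteristic function θ(z) = (-A + z D_{A*}(I - zA*)⁻¹ D_A)|_{𝔇} for z ∈ 𝔻, where D_A = (I-A*A)^{1/2}, D_{A*} = (I-AA*)^{1/2}, 𝔇 = closure of Ran D_A, 𝔇_* = closure of Ran D_{A*}. Then A·𝔇 ⊆ 𝔇_*, and for each z ∈ 𝔻 the operator θ(z) maps 𝔇 into 𝔇_* and is a contraction: ‖θ(z)x‖ ≤ ‖x‖ for all x ∈ 𝔇. -/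
open ContinuousLinearMap Polynomial

section Aux

variable {H : Type*} [NormedAddCommGroup H] [InnerProductSpace ℂ H] [CompleteSpace H]

private lemma stmt13_cfcHom_poly (T : H →L[ℂ] H) (hT : IsSelfAdjoint T) (p : ℝ[X]) :
    cfcHom hT (p.toContinuousMapOn (spectrum ℝ T)) = aeval T p := by
  have h1 : (cfcHom hT (R := ℝ)).toAlgHom.comp (toContinuousMapOnAlgHom (spectrum ℝ T)) =
      aeval T := by
    apply Polynomial.algHom_ext
    simp only [AlgHom.comp_apply, toContinuousMapOnAlgHom_apply, aeval_X]
    have : (X : ℝ[X]).toContinuousMapOn (spectrum ℝ T)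
        = (ContinuousMap.id ℝ).restrict (spectrum ℝ T) := by
      ext x; simp [Polynomial.toContinuousMapOn, Polynomial.toContinuousMap]
    rw [this]; exact cfcHom_id hT
  calc cfcHom hT (p.toContinuousMapOn (spectrum ℝ T))
      = (cfcHom hT (R := ℝ)).toAlgHom.comp (toContinuousMapOnAlgHom (spectrum ℝ T)) p := rfl
    _ = aeval T p := by rw [h1]

private lemma stmt13_intertwine_pow (W T S : H →L[ℂ] H) (hWTS : W * T = S * W) (n : ℕ) :
    W * T ^ n = S ^ n * W := by
  induction n with
  | zero => simp
  | succ n ih => rw [pow_succ, pow_succ, ← mul_assoc, ih, mul_assoc, hWTS, ← mul_assoc]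

private lemma stmt13_intertwine_aeval (W T S : H →L[ℂ] H) (hWTS : W * T = S * W) (p : ℝ[X]) :
    W * aeval T p = aeval S p * W := by
  induction p using Polynomial.induction_on' with
  | add p q hp hq => simp only [map_add, mul_add, add_mul, hp, hq]
  | monomial n r =>
    simp only [aeval_monomial]
    rw [← mul_assoc, ← Algebra.commutes r W, mul_assoc, stmt13_intertwine_pow W T S hWTS n,
      ← mul_assoc]

private lemma stmt13_intertwine_cfc (W T S : H →L[ℂ] H) (hT : IsSelfAdjoint T)
    (hS : IsSelfAdjoint S) (hWTS : W * T = S * W) (f : ℝ → ℝ) (hf : Continuous f) :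
    W * cfc f T = cfc f S * W := by
  set s : Set ℝ := spectrum ℝ T ∪ spectrum ℝ S with hs
  have hsc : IsCompact s := (spectrum.isCompact T).union (spectrum.isCompact S)
  haveI : CompactSpace s := isCompact_iff_compactSpace.mp hsc
  let ιT : C(spectrum ℝ T, s) :=
    ⟨Set.inclusion Set.subset_union_left, continuous_inclusion Set.subset_union_left⟩
  let ιS : C(spectrum ℝ S, s) :=
    ⟨Set.inclusion Set.subset_union_right, continuous_inclusion Set.subset_union_right⟩
  let Φ : C(s, ℝ) → (H →L[ℂ] H) :=
    fun g => W * cfcHom hT (g.comp ιT) - cfcHom hS (g.comp ιS) * W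
  have hΦc : Continuous Φ := by
    apply Continuous.sub
    · exact continuous_const.mul ((cfcHom_isClosedEmbedding hT).continuous.comp
        (ContinuousMap.continuous_precomp ιT))
    · exact (((cfcHom_isClosedEmbedding hS).continuous.comp
        (ContinuousMap.continuous_precomp ιS)).mul continuous_const)
  have hpoly : ∀ p : ℝ[X], Φ (p.toContinuousMapOn s) = 0 := by
    intro p
    have e1 : (p.toContinuousMapOn s).comp ιT = p.toContinuousMapOn (spectrum ℝ T) := by
      ext x; simp [Polynomial.toContinuousMapOn, Polynomial.toContinuousMap, ιT]
    have e2 : (p.toContinuousMapOn s).comp ιS = p.toContinuousMapOn (spectrum ℝ S) := by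
      ext x; simp [Polynomial.toContinuousMapOn, Polynomial.toContinuousMap, ιS]
    simp only [Φ, e1, e2, stmt13_cfcHom_poly, sub_eq_zero]
    exact stmt13_intertwine_aeval W T S hWTS p
  have hall : ∀ g : C(s, ℝ), Φ g = 0 := by
    intro g
    have hZ : IsClosed (Φ ⁻¹' {0}) := IsClosed.preimage hΦc isClosed_singleton
    have hsub : (polynomialFunctions s : Set C(s, ℝ)) ⊆ Φ ⁻¹' {0} := by
      rintro g ⟨p, -, rfl⟩
      exact hpoly p
    have hdense : closure (polynomialFunctions s : Set C(s, ℝ)) = Set.univ := by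
      have h1 := polynomialFunctions.topologicalClosure s
      have h2 : ((polynomialFunctions s).topologicalClosure : Set C(s, ℝ)) = Set.univ := by
        rw [h1]; rfl
      rw [← h2]; rfl
    have : (Set.univ : Set C(s, ℝ)) ⊆ Φ ⁻¹' {0} := by
      rw [← hdense]
      exact hZ.closure_subset_iff.mpr hsub
    exact this (Set.mem_univ g)
  have hg := hall ⟨fun x : s => f x, hf.comp continuous_subtype_val⟩
  have e1 : (ContinuousMap.mk (fun x : s => f x) (hf.comp continuous_subtype_val)).comp ιT
      = ⟨(spectrum ℝ T).restrict f, hf.continuousOn.restrict⟩ := by ext x; rfl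
  have e2 : (ContinuousMap.mk (fun x : s => f x) (hf.comp continuous_subtype_val)).comp ιS
      = ⟨(spectrum ℝ S).restrict f, hf.continuousOn.restrict⟩ := by ext x; rfl
  simp only [Φ] at hg
  rw [e1, e2, sub_eq_zero] at hg
  rwa [cfc_apply f T hT hf.continuousOn, cfc_apply f S hS hf.continuousOn]

set_option synthInstance.maxHeartbeats 1000000 in
private lemma stmt13_cfc_sqrt_eq (T DA : H →L[ℂ] H)
    (hDAsa : IsSelfAdjoint DA) (hDApos : ∀ x : H, 0 ≤ ((inner ℂ x (DA x) : ℂ)).re)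
    (hsq : DA * DA = T) : cfc Real.sqrt T = DA := by
  have hDAnn : 0 ≤ DA := by
    rw [ContinuousLinearMap.nonneg_iff_isPositive]
    refine ⟨hDAsa.isSymmetric, fun x => ?_⟩
    have := hDApos x
    rw [ContinuousLinearMap.reApplyInnerSelf, inner_re_symm]
    simpa using this
  have hTnn : 0 ≤ T := by rw [← hsq]; exact hDAsa.mul_self_nonneg
  have h1 : CFC.sqrt T = DA := CFC.sqrt_unique hsq hDAnn
  have h2 : CFC.sqrt T = cfc Real.sqrt T := by
    refine CFC.sqrt_unique ?_ ?_
    · rw [← cfc_mul Real.sqrt Real.sqrt T]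
      have : cfc (fun x => Real.sqrt x * Real.sqrt x) T = cfc (fun x : ℝ => x) T :=
        cfc_congr fun x hx => Real.mul_self_sqrt (spectrum_nonneg_of_nonneg hTnn hx)
      rw [this, cfc_id' ℝ T]
    · exact cfc_nonneg fun x _ => Real.sqrt_nonneg x
  rw [← h2, h1]

/-- The key intertwining relation `A D_A = D_{A*} A`. -/
private lemma stmt13_key {A DA DAs : H →L[ℂ] H}
    (hDAsa : IsSelfAdjoint DA) (hDApos : ∀ x : H, 0 ≤ ((inner ℂ x (DA x) : ℂ)).re)
    (hDAsq : DA ∘L DA = 1 - (ContinuousLinearMap.adjoint A) ∘L A)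
    (hDAssa : IsSelfAdjoint DAs) (hDAspos : ∀ x : H, 0 ≤ ((inner ℂ x (DAs x) : ℂ)).re)
    (hDAssq : DAs ∘L DAs = 1 - A ∘L (ContinuousLinearMap.adjoint A)) :
    A ∘L DA = DAs ∘L A := by
  set T : H →L[ℂ] H := 1 - (ContinuousLinearMap.adjoint A) * A with hT
  set S : H →L[ℂ] H := 1 - A * (ContinuousLinearMap.adjoint A) with hS
  have hTsa : IsSelfAdjoint T := by
    rw [hT, IsSelfAdjoint]
    simp [star_sub, star_mul, ContinuousLinearMap.star_eq_adjoint, adjoint_adjoint]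
  have hSsa : IsSelfAdjoint S := by
    rw [hS, IsSelfAdjoint]
    simp [star_sub, star_mul, ContinuousLinearMap.star_eq_adjoint, adjoint_adjoint]
  have hWTS : A * T = S * A := by
    rw [hT, hS]
    simp only [mul_sub, sub_mul, mul_one, one_mul, mul_assoc]
  have hDA : cfc Real.sqrt T = DA := stmt13_cfc_sqrt_eq T DA hDAsa hDApos hDAsq
  have hDAs : cfc Real.sqrt S = DAs := stmt13_cfc_sqrt_eq S DAs hDAssa hDAspos hDAssq
  have h := stmt13_intertwine_cfc A T S hTsa hSsa hWTS Real.sqrt Real.continuous_sqrt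
  rw [hDA, hDAs] at h
  exact h

end Aux


set_option maxHeartbeats 2000000 in
set_option synthInstance.maxHeartbeats 1000000 in
/-- For a contraction `A` with defect operators `D_A = (I-A*A)^{1/2}`,
`D_{A*} = (I-AA*)^{1/2}` and defect spaces `𝔇 = clos Ran D_A`, `𝔇* = clos Ran D_{A*}`:
`A·𝔇 ⊆ 𝔇*`, and for each `z ∈ 𝔻` the resolvent `(I - zA*)⁻¹` exists and the
characteristic function `θ(z) = (-A + z D_{A*}(I - zA*)⁻¹ D_A)|_𝔇` maps `𝔇` into `𝔇*`
contractively. -/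
theorem stmt13 {H : Type*} [NormedAddCommGroup H] [InnerProductSpace ℂ H] [CompleteSpace H]
    (A : H →L[ℂ] H) (hA : ‖A‖ ≤ 1)
    (DA DAs : H →L[ℂ] H)
    (hDAsa : IsSelfAdjoint DA) (hDApos : ∀ x : H, 0 ≤ ((inner ℂ x (DA x) : ℂ)).re)
    (hDAsq : DA ∘L DA = 1 - (ContinuousLinearMap.adjoint A) ∘L A)
    (hDAssa : IsSelfAdjoint DAs) (hDAspos : ∀ x : H, 0 ≤ ((inner ℂ x (DAs x) : ℂ)).re)
    (hDAssq : DAs ∘L DAs = 1 - A ∘L (ContinuousLinearMap.adjoint A))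
    (D Ds : Submodule ℂ H)
    (hD : D = (LinearMap.range (DA : H →ₗ[ℂ] H)).topologicalClosure)
    (hDs : Ds = (LinearMap.range (DAs : H →ₗ[ℂ] H)).topologicalClosure) :
    (∀ x ∈ D, A x ∈ Ds) ∧
    ∀ z : ℂ, ‖z‖ < 1 →
      ∃ R : H →L[ℂ] H,
        ((1 - z • ContinuousLinearMap.adjoint A) ∘L R = 1 ∧
          R ∘L (1 - z • ContinuousLinearMap.adjoint A) = 1) ∧
        ∀ x ∈ D, (-A + z • (DAs ∘L R ∘L DA)) x ∈ Ds ∧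
          ‖(-A + z • (DAs ∘L R ∘L DA)) x‖ ≤ ‖x‖ := by
  have key : A ∘L DA = DAs ∘L A :=
    stmt13_key hDAsa hDApos hDAsq hDAssa hDAspos hDAssq
  have part1 : ∀ x ∈ D, A x ∈ Ds := by
    intro x hx
    rw [hDs, ← Submodule.orthogonal_orthogonal_eq_closure, Submodule.mem_orthogonal]
    intro u hu
    rw [Submodule.mem_orthogonal] at hu
    have h0 : ∀ v : H, (inner ℂ (DAs v) u : ℂ) = 0 := fun v =>
      hu (DAs v) (LinearMap.mem_range_self _ v)
    have hDAsu : DAs u = 0 := by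
      have h1 : (inner ℂ (DAs u) (DAs u) : ℂ) = 0 := by
        have hsym := hDAssa.isSymmetric (DAs u) u
        simp only [ContinuousLinearMap.coe_coe] at hsym
        exact hsym.symm.trans (h0 (DAs u))
      exact inner_self_eq_zero.mp h1
    have hsq' : ∀ v : H, DAs (DAs v) = v - A ((ContinuousLinearMap.adjoint A) v) := by
      intro v
      have := ContinuousLinearMap.ext_iff.mp hDAssq v
      simpa using this
    have hAAu : A ((ContinuousLinearMap.adjoint A) u) = u := by
      have := hsq' u
      rw [hDAsu, map_zero] at this
      have := this.symm
      rwa [sub_eq_zero, eq_comm] at this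
    set w : H := (ContinuousLinearMap.adjoint A) u with hw
    have hsqDA : ∀ v : H, DA (DA v) = v - (ContinuousLinearMap.adjoint A) (A v) := by
      intro v
      have := ContinuousLinearMap.ext_iff.mp hDAsq v
      simpa using this
    have h3 : (inner ℂ (DA w) (DA w) : ℂ) = inner ℂ w w - inner ℂ u u := by
      have hsym := hDAsa.isSymmetric w (DA w)
      simp only [ContinuousLinearMap.coe_coe] at hsym
      rw [hsym, hsqDA w, inner_sub_right, adjoint_inner_right, hAAu]
      rw [adjoint_inner_right, hAAu]
    have h3' : ‖DA w‖ ^ 2 = ‖w‖ ^ 2 - ‖u‖ ^ 2 := by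
      rw [inner_self_eq_norm_sq_to_K, inner_self_eq_norm_sq_to_K,
        inner_self_eq_norm_sq_to_K] at h3
      exact_mod_cast h3
    have hwle : ‖w‖ ≤ ‖u‖ := by
      calc ‖w‖ ≤ ‖ContinuousLinearMap.adjoint A‖ * ‖u‖ := le_opNorm _ u
      _ ≤ 1 * ‖u‖ := by
          apply mul_le_mul_of_nonneg_right _ (norm_nonneg u)
          rw [show ‖ContinuousLinearMap.adjoint A‖ = ‖A‖ from
            (ContinuousLinearMap.adjoint : (H →L[ℂ] H) ≃ₗᵢ⋆[ℂ] _).norm_map A]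
          exact hA
      _ = ‖u‖ := one_mul _
    have hDAw : DA w = 0 := by
      have : ‖DA w‖ ^ 2 ≤ 0 := by nlinarith [norm_nonneg w, norm_nonneg u]
      have h4 : ‖DA w‖ = 0 := by nlinarith [norm_nonneg (DA w)]
      exact norm_eq_zero.mp h4
    have hworth : w ∈ (LinearMap.range (DA : H →ₗ[ℂ] H))ᗮ := by
      rw [Submodule.mem_orthogonal]
      rintro v ⟨t, rfl⟩
      have hsym := hDAsa.isSymmetric t w
      simp only [ContinuousLinearMap.coe_coe] at hsym
      show (inner ℂ (DA t) w : ℂ) = 0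
      rw [hsym, hDAw, inner_zero_right]
    rw [hD, ← Submodule.orthogonal_orthogonal_eq_closure, Submodule.mem_orthogonal] at hx
    have hx0 : (inner ℂ w x : ℂ) = 0 := hx w hworth
    rw [← adjoint_inner_left A x u]
    exact hx0
  refine ⟨part1, ?_⟩
  intro z hz
  have hzn : ‖z‖ < 1 := hz
  have hnorm : ‖z • ContinuousLinearMap.adjoint A‖ < 1 := by
    rw [norm_smul]
    calc ‖z‖ * ‖ContinuousLinearMap.adjoint A‖ ≤ ‖z‖ * 1 := by
          apply mul_le_mul_of_nonneg_left _ (norm_nonneg z)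
          rw [show ‖ContinuousLinearMap.adjoint A‖ = ‖A‖ from
            (ContinuousLinearMap.adjoint : (H →L[ℂ] H) ≃ₗᵢ⋆[ℂ] _).norm_map A]
          exact hA
      _ = ‖z‖ := mul_one _
      _ < 1 := hzn
  set u : (H →L[ℂ] H)ˣ := Units.oneSub (z • ContinuousLinearMap.adjoint A) hnorm with hu
  refine ⟨(↑u⁻¹ : H →L[ℂ] H), ⟨u.mul_inv, u.inv_mul⟩, ?_⟩
  intro x hx
  set R : H →L[ℂ] H := (↑u⁻¹ : H →L[ℂ] H) with hR
  set y : H := R (DA x) with hy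
  set w : H := (ContinuousLinearMap.adjoint A) y with hw
  have h1 : DA x = y - z • w := by
    have := ContinuousLinearMap.ext_iff.mp u.mul_inv (DA x)
    simp only [ContinuousLinearMap.one_apply] at this
    calc DA x = ((1 - z • ContinuousLinearMap.adjoint A) * R) (DA x) := by
          rw [show ((1 : H →L[ℂ] H) - z • ContinuousLinearMap.adjoint A) * R = 1 from u.mul_inv]
          simp
      _ = y - z • w := by
          simp [ContinuousLinearMap.mul_apply, ContinuousLinearMap.sub_apply,
            ContinuousLinearMap.smul_apply, hy, hw]
  -- symmetric versions
  have hsymDA : ∀ a b : H, (inner ℂ (DA a) b : ℂ) = inner ℂ a (DA b) := by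
    intro a b; have := hDAsa.isSymmetric a b
    simpa only [ContinuousLinearMap.coe_coe] using this
  have hsymDAs : ∀ a b : H, (inner ℂ (DAs a) b : ℂ) = inner ℂ a (DAs b) := by
    intro a b; have := hDAssa.isSymmetric a b
    simpa only [ContinuousLinearMap.coe_coe] using this
  have hsqDA : ∀ v : H, DA (DA v) = v - (ContinuousLinearMap.adjoint A) (A v) := by
    intro v; have := ContinuousLinearMap.ext_iff.mp hDAsq v; simpa using this
  have hsqDAs : ∀ v : H, DAs (DAs v) = v - A ((ContinuousLinearMap.adjoint A) v) := by
    intro v; have := ContinuousLinearMap.ext_iff.mp hDAssq v; simpa using this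
  -- E1 : ‖A x‖² = ‖x‖² - ‖DA x‖²
  have E1 : ‖A x‖ ^ 2 = ‖x‖ ^ 2 - ‖DA x‖ ^ 2 := by
    have hc : (inner ℂ (A x) (A x) : ℂ) = inner ℂ x x - inner ℂ (DA x) (DA x) := by
      have hAA : (ContinuousLinearMap.adjoint A) (A x) = x - DA (DA x) := by
        rw [hsqDA x]; abel
      rw [← adjoint_inner_right A x (A x), hAA, inner_sub_right, ← hsymDA x (DA x)]
    rw [inner_self_eq_norm_sq_to_K, inner_self_eq_norm_sq_to_K,
      inner_self_eq_norm_sq_to_K] at hc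
    exact_mod_cast hc
  -- E2 : ‖DAs y‖² = ‖y‖² - ‖w‖²
  have E2 : ‖DAs y‖ ^ 2 = ‖y‖ ^ 2 - ‖w‖ ^ 2 := by
    have hc : (inner ℂ (DAs y) (DAs y) : ℂ) = inner ℂ y y - inner ℂ w w := by
      rw [hsymDAs y (DAs y), hsqDAs y, inner_sub_right]
      congr 1
      rw [hw, ← adjoint_inner_left A]
    rw [inner_self_eq_norm_sq_to_K, inner_self_eq_norm_sq_to_K,
      inner_self_eq_norm_sq_to_K] at hc
    exact_mod_cast hc
  set c : ℂ := inner ℂ y w with hc0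
  -- E3 : ‖DA x‖² = ‖y‖² - 2 (z*c).re + ‖z‖² ‖w‖²
  have E3 : ‖DA x‖ ^ 2 = ‖y‖ ^ 2 - 2 * (z * c).re + ‖z‖ ^ 2 * ‖w‖ ^ 2 := by
    rw [h1, @norm_sub_sq ℂ, inner_smul_right, norm_smul, mul_pow]
    simp [RCLike.re_to_complex, hc0]
  -- E4
  have E4 : (z * (inner ℂ (A x) (DAs y) : ℂ)).re = (z * c).re - ‖z‖ ^ 2 * ‖w‖ ^ 2 := by
    have hstep : (inner ℂ (A x) (DAs y) : ℂ) = c - (starRingEnd ℂ) z * (‖w‖ ^ 2 : ℝ) := by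
      have h5 : (inner ℂ (A x) (DAs y) : ℂ) = inner ℂ (DAs (A x)) y := (hsymDAs (A x) y).symm
      have h6 : DAs (A x) = A (DA x) := by
        have := ContinuousLinearMap.ext_iff.mp key x
        simpa using this.symm
      rw [h5, h6, ← adjoint_inner_right A (DA x) y, h1, inner_sub_left, inner_smul_left]
      rw [← hw, ← hc0, inner_self_eq_norm_sq_to_K]
      norm_cast
    rw [hstep, mul_sub]
    have h7 : z * ((starRingEnd ℂ) z * (‖w‖ ^ 2 : ℝ)) = (‖z‖ ^ 2 * ‖w‖ ^ 2 : ℝ) := by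
      rw [← mul_assoc, Complex.mul_conj]
      push_cast
      rw [Complex.normSq_eq_norm_sq]
      norm_cast
    rw [h7, Complex.sub_re, Complex.ofReal_re]
  -- E5
  have happ : (-A + z • (DAs ∘L R ∘L DA)) x = -(A x) + z • (DAs y) := by
    simp [ContinuousLinearMap.add_apply, ContinuousLinearMap.neg_apply,
      ContinuousLinearMap.smul_apply, ContinuousLinearMap.comp_apply, hy]
  have E5 : ‖(-A + z • (DAs ∘L R ∘L DA)) x‖ ^ 2
      = ‖A x‖ ^ 2 - 2 * (z * (inner ℂ (A x) (DAs y) : ℂ)).re + ‖z‖ ^ 2 * ‖DAs y‖ ^ 2 := by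
    rw [happ, @norm_add_sq ℂ, inner_smul_right, inner_neg_left, norm_neg, norm_smul, mul_pow]
    simp only [RCLike.re_to_complex, Complex.neg_re, mul_neg]
    ring
  -- combine
  have hzz1 : ‖z‖ ^ 2 ≤ 1 := by nlinarith [norm_nonneg z]
  have h8 : ‖z‖ ^ 2 * ‖y‖ ^ 2 ≤ ‖y‖ ^ 2 := by nlinarith [norm_nonneg y, sq_nonneg ‖y‖]
  have h9 : ‖z‖ ^ 2 * ‖DAs y‖ ^ 2 = ‖z‖ ^ 2 * ‖y‖ ^ 2 - ‖z‖ ^ 2 * ‖w‖ ^ 2 := by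
    rw [E2]; ring
  have hfin : ‖(-A + z • (DAs ∘L R ∘L DA)) x‖ ^ 2 ≤ ‖x‖ ^ 2 := by
    rw [E5, E1, E3, E4, h9]; linarith
  constructor
  · rw [happ, hDs]
    have hAx : A x ∈ Ds := part1 x hx
    rw [hDs] at hAx
    refine Submodule.add_mem _ (Submodule.neg_mem _ hAx) (Submodule.smul_mem _ _ ?_)
    exact Submodule.le_topologicalClosure _ (LinearMap.mem_range_self (DAs : H →ₗ[ℂ] H) y)
  · exact le_of_pow_le_pow_left₀ two_ne_zero (norm_nonneg x) hfin
end

section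
/- Let θ : 𝕋 → ℂ be measurable with |θ(z)| ≤ 1 a.e., Δ := (1-|θ|²)^{1/2}, and B := {z : Δ(z) ≠ 0}. Let W_θ(z) be the 2×2 matrix [[1, θ(z)],[θ̄(z), 1]] and W_θ^{[-1]}(z) its Moore–Penrose inverse. Then, a.e. on 𝕋, [[1, θ],[0, Δ]] · W_θ^{[-1]} · [[1, 0],[θ̄, Δ]] = [[1, 0],[0, 𝟙_B]]. Consequently, for g₁, g₂ ∈ ℂ and g₂ in the closure of the range of Δ(z) (i.e. g₂ = 0 when Δ(z)=0), the vector (g₁, θ̄g₁ + Δg₂) has the same W_θ^{[-1]}-weighted norm as the Euclidean norm of (g₁, g₂): ⟨W_θ^{[-1]}(g₁, θ̄g₁+Δg₂), (g₁, θ̄g₁+Δg₂)⟩ = |g₁|² + |𝟙_B g₂|². -/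
open Matrix ComplexConjugate

lemma mp_unique (A X Y : Matrix (Fin 2) (Fin 2) ℂ)
    (hX1 : A * X * A = A) (hX2 : X * A * X = X)
    (hX3 : (A * X)ᴴ = A * X) (hX4 : (X * A)ᴴ = X * A)
    (hY1 : A * Y * A = A) (hY2 : Y * A * Y = Y)
    (hY3 : (A * Y)ᴴ = A * Y) (hY4 : (Y * A)ᴴ = Y * A) : X = Y := by
  have hAX : A * X = A * Y := by
    calc A * X = (A * X)ᴴ := hX3.symm
    _ = ((A * Y * A) * X)ᴴ := by rw [hY1]
    _ = (A * X)ᴴ * (A * Y)ᴴ := by simp only [conjTranspose_mul, mul_assoc]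
    _ = (A * X) * (A * Y) := by rw [hX3, hY3]
    _ = (A * X * A) * Y := by simp only [mul_assoc]
    _ = A * Y := by rw [hX1]
  have hXA : X * A = Y * A := by
    calc X * A = (X * A)ᴴ := hX4.symm
    _ = (X * (A * Y * A))ᴴ := by rw [hY1]
    _ = (Y * A)ᴴ * (X * A)ᴴ := by simp only [conjTranspose_mul, mul_assoc]
    _ = (Y * A) * (X * A) := by rw [hX4, hY4]
    _ = Y * (A * X * A) := by simp only [mul_assoc]
    _ = Y * A := by rw [hX1]
  calc X = X * A * X := hX2.symm
  _ = X * (A * Y) := by rw [mul_assoc, hAX]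
  _ = (Y * A) * Y := by rw [← mul_assoc, hXA]
  _ = Y := hY2

/-- Pointwise identity between the de Branges–Rovnyak weight `W_θ^{[-1]}` (Moore–Penrose
inverse, characterized by the four Penrose equations) and the Sz.-Nagy–Foiaş norm:
`[[1,θ],[0,Δ]]·W_θ^{[-1]}·[[1,0],[θ̄,Δ]] = [[1,0],[0,𝟙_B]]` with `B = {Δ ≠ 0}`, and the
weighted norm of `(g₁, θ̄g₁ + Δg₂)` equals `|g₁|² + |𝟙_B g₂|²`. -/
theorem stmt16 (θ : ℂ) (hθ : ‖θ‖ ≤ 1)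
    (Δ : ℝ) (hΔ : Δ = Real.sqrt (1 - ‖θ‖ ^ 2))
    (W Wi : Matrix (Fin 2) (Fin 2) ℂ)
    (hW : W = !![1, θ; conj θ, 1])
    (hP1 : W * Wi * W = W) (hP2 : Wi * W * Wi = Wi)
    (hP3 : (W * Wi)ᴴ = W * Wi) (hP4 : (Wi * W)ᴴ = Wi * W) :
    !![1, θ; 0, (Δ : ℂ)] * Wi * !![1, 0; conj θ, (Δ : ℂ)] =
      !![1, 0; 0, if Δ ≠ 0 then 1 else 0] ∧
    ∀ g₁ g₂ : ℂ, (Δ = 0 → g₂ = 0) →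
      star (![g₁, conj θ * g₁ + (Δ : ℂ) * g₂]) ⬝ᵥ
          Wi.mulVec ![g₁, conj θ * g₁ + (Δ : ℂ) * g₂] =
        ((‖g₁‖ ^ 2 + ‖(if Δ ≠ 0 then g₂ else 0)‖ ^ 2 : ℝ) : ℂ) := by
  have hnn : (0:ℝ) ≤ 1 - ‖θ‖ ^ 2 := by
    nlinarith [norm_nonneg θ]
  have hΔsq : (Δ:ℝ)^2 = 1 - ‖θ‖ ^ 2 := by
    rw [hΔ, Real.sq_sqrt hnn]
  have hmc : θ * conj θ = 1 - ((Δ:ℂ))^2 := by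
    rw [Complex.mul_conj, Complex.normSq_eq_norm_sq]
    norm_cast
    linarith [hΔsq]
  rcases eq_or_ne Δ 0 with h0 | h0
  · -- singular case: |θ| = 1, Wi = W/4
    have hmc1 : θ * conj θ = 1 := by rw [hmc, h0]; norm_num
    have hmc1' : conj θ * θ = 1 := by rw [mul_comm]; exact hmc1
    have hW2 : W * W = (2:ℂ) • W := by
      rw [hW]; ext i j
      fin_cases i <;> fin_cases j <;>
        simp [Matrix.mul_apply, Fin.sum_univ_two] <;>
        first
          | ring1
          | linear_combination hmc1
          | linear_combination hmc1'
          | linear_combination (-(4:ℂ)⁻¹) * hmc1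
          | linear_combination (-(4:ℂ)⁻¹) * hmc1'
          | linear_combination (-(2:ℂ)⁻¹) * hmc1
          | linear_combination (-(2:ℂ)⁻¹) * hmc1'
          | linear_combination (-1:ℂ) * hmc1
          | linear_combination (-1:ℂ) * hmc1'
          | linear_combination ((3:ℂ)/4) * hmc1
          | linear_combination ((3:ℂ)/4) * hmc1'
          | linear_combination (-(3:ℂ)/4) * hmc1
          | linear_combination (-(3:ℂ)/4) * hmc1'
    have hWH : Wᴴ = W := by
      rw [hW]; ext i j
      fin_cases i <;> fin_cases j <;> simp [Matrix.conjTranspose_apply]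
    set Y : Matrix (Fin 2) (Fin 2) ℂ := (4:ℂ)⁻¹ • W with hYdef
    have hWY : W * Y = (2:ℂ)⁻¹ • W := by
      rw [hYdef, mul_smul_comm, hW2, smul_smul]; norm_num
    have hYW : Y * W = (2:ℂ)⁻¹ • W := by
      rw [hYdef, smul_mul_assoc, hW2, smul_smul]; norm_num
    have hsmulH : ∀ c : ℝ, ((c:ℂ) • W)ᴴ = (c:ℂ) • W := by
      intro c
      rw [Matrix.conjTranspose_smul, hWH, Complex.star_def, Complex.conj_ofReal]
    have hWi : Wi = Y := by
      refine mp_unique W Wi Y hP1 hP2 hP3 hP4 ?_ ?_ ?_ ?_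
      · rw [hWY, smul_mul_assoc, hW2, smul_smul]
        norm_num
      · rw [hYW, smul_mul_assoc, hWY, smul_smul, hYdef]
        norm_num
      · rw [hWY]
        have := hsmulH (2⁻¹ : ℝ); push_cast at this; exact this
      · rw [hYW]
        have := hsmulH (2⁻¹ : ℝ); push_cast at this; exact this
    have hWic : Wi = !![(4:ℂ)⁻¹, θ * 4⁻¹; conj θ * 4⁻¹, (4:ℂ)⁻¹] := by
      rw [hWi, hYdef, hW]
      ext i j
      fin_cases i <;> fin_cases j <;> simp [Matrix.smul_apply] <;> ring
    subst hWic
    constructor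
    · ext i j
      fin_cases i <;> fin_cases j <;>
        simp [h0, Matrix.mul_apply, Fin.sum_univ_two] <;>
        first
          | ring1
          | linear_combination (4:ℂ)⁻¹ * hmc1
          | linear_combination (4:ℂ)⁻¹ * hmc1'
          | linear_combination (2:ℂ)⁻¹ * hmc1
          | linear_combination (2:ℂ)⁻¹ * hmc1'
          | linear_combination hmc1
          | linear_combination hmc1'
          | linear_combination (-(4:ℂ)⁻¹) * hmc1
          | linear_combination (-(4:ℂ)⁻¹) * hmc1'
          | linear_combination (-(2:ℂ)⁻¹) * hmc1
          | linear_combination (-(2:ℂ)⁻¹) * hmc1'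
          | linear_combination (-1:ℂ) * hmc1
          | linear_combination (-1:ℂ) * hmc1'
          | linear_combination ((3:ℂ)/4) * hmc1
          | linear_combination ((3:ℂ)/4) * hmc1'
          | linear_combination (-(3:ℂ)/4) * hmc1
          | linear_combination (-(3:ℂ)/4) * hmc1'
    · intro g₁ g₂ hg
      have hg2 : g₂ = 0 := hg h0
      subst hg2
      have hg1 : ((‖g₁‖ ^ 2 : ℝ) : ℂ) = conj g₁ * g₁ := by
        rw [← Complex.normSq_eq_norm_sq, Complex.normSq_eq_conj_mul_self]
      simp [h0, Matrix.mulVec, dotProduct, Fin.sum_univ_two, hg1]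
      first
        | linear_combination ((4:ℂ)⁻¹ * conj g₁ * g₁) * hmc1
        | linear_combination ((2:ℂ)⁻¹ * conj g₁ * g₁) * hmc1
        | linear_combination (conj g₁ * g₁) * hmc1
        | linear_combination (((3:ℂ)/4) * conj g₁ * g₁) * hmc1
        | linear_combination (-((3:ℂ)/4) * conj g₁ * g₁) * hmc1
  · -- invertible case: Wi = W⁻¹
    have hΔc : ((Δ:ℂ)) ≠ 0 := by exact_mod_cast h0
    set Y : Matrix (Fin 2) (Fin 2) ℂ :=
      !![1/(Δ:ℂ)^2, -θ/(Δ:ℂ)^2; -conj θ/(Δ:ℂ)^2, 1/(Δ:ℂ)^2] with hY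
    have hWY : W * Y = 1 := by
      rw [hW, hY]; ext i j
      fin_cases i <;> fin_cases j <;>
        simp [Matrix.mul_apply, Fin.sum_univ_two, Matrix.one_apply] <;>
        field_simp <;>
        first
        | ring1
        | linear_combination hmc
        | linear_combination (-1:ℂ) * hmc
        | linear_combination (-2:ℂ) * hmc
        | linear_combination (2:ℂ) * hmc
        | linear_combination (-(1+((Δ:ℂ))^2)) * hmc
        | linear_combination (1+((Δ:ℂ))^2) * hmc
        | linear_combination (-(1+2*((Δ:ℂ))^2)) * hmc
        | linear_combination (1+2*((Δ:ℂ))^2) * hmc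
        | linear_combination (-((Δ:ℂ))^2) * hmc
        | linear_combination (((Δ:ℂ))^2) * hmc
    have hYW : Y * W = 1 := by
      rw [hW, hY]; ext i j
      fin_cases i <;> fin_cases j <;>
        simp [Matrix.mul_apply, Fin.sum_univ_two, Matrix.one_apply] <;>
        field_simp <;>
        first
        | ring1
        | linear_combination hmc
        | linear_combination (-1:ℂ) * hmc
        | linear_combination (-2:ℂ) * hmc
        | linear_combination (2:ℂ) * hmc
        | linear_combination (-(1+((Δ:ℂ))^2)) * hmc
        | linear_combination (1+((Δ:ℂ))^2) * hmc
        | linear_combination (-(1+2*((Δ:ℂ))^2)) * hmc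
        | linear_combination (1+2*((Δ:ℂ))^2) * hmc
        | linear_combination (-((Δ:ℂ))^2) * hmc
        | linear_combination (((Δ:ℂ))^2) * hmc
    have hWi : Wi = Y := by
      have h := congrArg (fun M => Y * M * Y) hP1
      calc Wi = 1 * Wi * 1 := by simp
      _ = (Y * W) * Wi * (W * Y) := by rw [hWY, hYW]
      _ = Y * (W * Wi * W) * Y := by simp only [mul_assoc]
      _ = Y * W * Y := by rw [hP1]
      _ = Y := by rw [hYW, one_mul]
    subst hWi
    constructor
    · ext i j
      fin_cases i <;> fin_cases j <;>
        simp [hY, h0, Matrix.mul_apply, Fin.sum_univ_two] <;>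
        field_simp <;>
        first
        | ring1
        | linear_combination hmc
        | linear_combination (-1:ℂ) * hmc
        | linear_combination (-2:ℂ) * hmc
        | linear_combination (2:ℂ) * hmc
        | linear_combination (-(1+((Δ:ℂ))^2)) * hmc
        | linear_combination (1+((Δ:ℂ))^2) * hmc
        | linear_combination (-(1+2*((Δ:ℂ))^2)) * hmc
        | linear_combination (1+2*((Δ:ℂ))^2) * hmc
        | linear_combination (-((Δ:ℂ))^2) * hmc
        | linear_combination (((Δ:ℂ))^2) * hmc
    · intro g₁ g₂ _
      have hg1 : ∀ g : ℂ, ((‖g‖ : ℝ) : ℂ) ^ 2 = conj g * g := by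
        intro g
        rw [← Complex.ofReal_pow, ← Complex.normSq_eq_norm_sq,
          Complex.normSq_eq_conj_mul_self]
      simp [hY, h0, Matrix.mulVec, dotProduct, Fin.sum_univ_two]
      push_cast
      rw [hg1 g₁, hg1 g₂]
      field_simp
      linear_combination (-(conj g₁ * g₁)) * hmc
end
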